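/- arXiv:1103.5846 — 4 statements merged into one kernel-verified Lean document; each statement's English description precedes it below -/
import Mathlib

section
/- If Σ is a connected bipartite graph, then the diameter of its subdivision graph S(Σ) equals twice the diameter of Σ. -/
open SimpleGraph Sum

variable {V : Type*}

/-- The subdivision graph of a simple graph: vertices are original vertices plus edges,
with adjacency given by incidence. -/
def SimpleGraph.subdivision (G : SimpleGraph V) : SimpleGraph (V ⊕ G.edgeSet) where
  Adj a b :=
    match a, b with
    | Sum.inl x, Sum.inr e => x ∈ (e : Sym2 V)
    | Sum.inr e, Sum.inl x => x ∈ (e : Sym2 V)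
    | _, _ => False
  symm := ⟨by
    rintro (x | e) (y | f) h <;> simp_all⟩
  loopless := ⟨by
    rintro (x | e) h <;> simp_all⟩

lemma subdivision_adj_inl_inr (G : SimpleGraph V) {x : V} {e : G.edgeSet}
    (h : x ∈ (e : Sym2 V)) : G.subdivision.Adj (inl x) (inr e) := h

/-- A walk in `G` lifts to a walk of twice the length in the subdivision. -/
lemma subdivision_walk_of_walk (G : SimpleGraph V) {x y : V} (p : G.Walk x y) :
    ∃ q : G.subdivision.Walk (inl x) (inl y), q.length = 2 * p.length := by
  induction p with
  | nil => exact ⟨.nil, rfl⟩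
  | @cons u v w h p ih =>
    obtain ⟨q, hq⟩ := ih
    have he : s(u, v) ∈ G.edgeSet := h
    refine ⟨.cons (subdivision_adj_inl_inr G (e := ⟨s(u,v), he⟩) ?_)
      (.cons ((subdivision_adj_inl_inr G (e := ⟨s(u,v), he⟩) ?_).symm) q), ?_⟩
    · exact Sym2.mem_mk_left u v
    · exact Sym2.mem_mk_right u v
    · simp [hq]; ring

/-- Any walk in the subdivision between two original vertices has length at least
twice the distance. -/
lemma two_mul_dist_le_subdivision_walk (G : SimpleGraph V) (hconn : G.Connected) :
    ∀ (n : ℕ) (x y : V) (p : G.subdivision.Walk (inl x) (inl y)),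
      p.length = n → 2 * G.dist x y ≤ n := by
  intro n
  induction n using Nat.strong_induction_on with
  | _ n ih =>
    intro x y p hl
    cases p with
    | nil =>
      rw [SimpleGraph.dist_self]
      omega
    | @cons _ b _ h q =>
      cases b with
      | inl z => exact h.elim
      | inr e =>
        cases q with
        | @cons _ c _ h2 q2 =>
          cases c with
          | inr f => exact h2.elim
          | inl z =>
            have hx : x ∈ (e : Sym2 V) := h
            have hz : z ∈ (e : Sym2 V) := h2
            have hxz : G.dist x z ≤ 1 := by
              by_cases hxe : x = z
              · subst hxe
                rw [SimpleGraph.dist_self]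
                omega
              · have hes : (e : Sym2 V) = s(x, z) :=
                  (Sym2.mem_and_mem_iff hxe).mp ⟨hx, hz⟩
                have h2' := e.2
                rw [hes] at h2'
                have hadj : G.Adj x z := (SimpleGraph.mem_edgeSet G).mp h2'
                simpa using G.dist_le hadj.toWalk
            have hlen : q2.length + 2 = n := by simpa using hl
            have hrec : 2 * G.dist z y ≤ q2.length :=
              ih q2.length (by omega) z y q2 rfl
            have htri : G.dist x y ≤ G.dist x z + G.dist z y :=
              hconn.dist_triangle
            omega

/-- Parity of walk lengths in a 2-colored graph. -/
lemma walk_length_parity (G : SimpleGraph V) (c : G.Coloring (Fin 2)) {u v : V}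
    (p : G.Walk u v) : Even p.length ↔ c u = c v := by
  induction p with
  | nil => simp
  | @cons u w v h p ih =>
    have hne : c u ≠ c w := c.valid h
    have key : ∀ a b d : Fin 2, a ≠ b → (¬ b = d ↔ a = d) := by decide
    simp only [SimpleGraph.Walk.length_cons, Nat.even_add_one, ih]
    exact key _ _ _ hne

lemma dist_parity (G : SimpleGraph V) (hconn : G.Connected) (c : G.Coloring (Fin 2))
    (x y : V) : Even (G.dist x y) ↔ c x = c y := by
  obtain ⟨p, hp⟩ := hconn.exists_walk_length_eq_dist x y
  rw [← hp]
  exact walk_length_parity G c p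

theorem subdivision_diam_of_bipartite [Fintype V] (G : SimpleGraph V) (hconn : G.Connected)
    (hbip : G.Colorable 2) (hne : G.edgeSet.Nonempty) :
    G.subdivision.diam = 2 * G.diam := by
  obtain ⟨c⟩ := hbip
  have : Nonempty V := hconn.nonempty
  -- connectivity of the subdivision
  have hreach : ∀ u : V ⊕ G.edgeSet, ∃ x : V, G.subdivision.Reachable u (inl x) := by
    rintro (x | ⟨e, he⟩)
    · exact ⟨x, by rfl⟩
    · induction e using Sym2.ind with
      | _ a b =>
        exact ⟨a, ((subdivision_adj_inl_inr G
          (e := ⟨s(a,b), he⟩) (Sym2.mem_mk_left a b)).symm).reachable⟩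
  have hreach_inl : ∀ x y : V, G.subdivision.Reachable (inl x) (inl y) := by
    intro x y
    obtain ⟨p⟩ := hconn x y
    obtain ⟨q, _⟩ := subdivision_walk_of_walk G p
    exact ⟨q⟩
  have SConn : G.subdivision.Connected := by
    rw [SimpleGraph.connected_iff]
    refine ⟨fun u v => ?_, inferInstance⟩
    obtain ⟨x, hx⟩ := hreach u
    obtain ⟨y, hy⟩ := hreach v
    exact (hx.trans (hreach_inl x y)).trans hy.symm
  -- finiteness of both ediams
  have hGtop : G.ediam ≠ ⊤ := by
    obtain ⟨u, v, huv⟩ := G.exists_edist_eq_ediam_of_finite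
    rw [← huv]
    exact edist_ne_top_iff_reachable.mpr (hconn u v)
  have hStop : G.subdivision.ediam ≠ ⊤ := by
    obtain ⟨u, v, huv⟩ := G.subdivision.exists_edist_eq_ediam_of_finite
    rw [← huv]
    exact edist_ne_top_iff_reachable.mpr (SConn u v)
  -- distance between original vertices
  have dist_inl_inl : ∀ x y : V,
      G.subdivision.dist (inl x) (inl y) = 2 * G.dist x y := by
    intro x y
    refine le_antisymm ?_ ?_
    · obtain ⟨p, hp⟩ := hconn.exists_walk_length_eq_dist x y
      obtain ⟨q, hq⟩ := subdivision_walk_of_walk G p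
      have := G.subdivision.dist_le q
      omega
    · obtain ⟨r, hr⟩ := SConn.exists_walk_length_eq_dist (inl x) (inl y)
      exact two_mul_dist_le_subdivision_walk G hconn _ x y r hr
  -- the key bound for vertex–edge distances
  have hclaim : ∀ (x : V) (f : G.edgeSet),
      G.subdivision.dist (inl x) (inr f) + 1 ≤ 2 * G.diam := by
    rintro x ⟨f, hf⟩
    induction f using Sym2.ind with
    | _ a b =>
      have hab : G.Adj a b := by rwa [SimpleGraph.mem_edgeSet] at hf
      have hparity : G.dist x a ≠ G.dist x b := by
        intro hEq
        have h1 := dist_parity G hconn c x a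
        have h2 := dist_parity G hconn c x b
        have : c a = c b := by
          rw [hEq] at h1
          have hiff : (c x = c a) ↔ (c x = c b) := h1.symm.trans h2
          have key : ∀ p q r : Fin 2, ((p = q) ↔ (p = r)) → q = r := by decide
          exact key _ _ _ hiff
        exact c.valid hab this
      have hda : G.dist x a ≤ G.diam := G.dist_le_diam hGtop
      have hdb : G.dist x b ≤ G.diam := G.dist_le_diam hGtop
      -- choose the endpoint at smaller distance
      have hmain : ∀ (w : V), w ∈ (s(a, b) : Sym2 V) → G.dist x w + 1 ≤ G.diam →
          G.subdivision.dist (inl x) (inr ⟨s(a,b), hf⟩) + 1 ≤ 2 * G.diam := by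
        intro w hw hwd
        have h1 : G.subdivision.dist (inl w) (inr ⟨s(a,b), hf⟩) ≤ 1 := by
          simpa using G.subdivision.dist_le (subdivision_adj_inl_inr G
            (e := ⟨s(a,b), hf⟩) hw).toWalk
        have htri := SConn.dist_triangle (u := inl x) (v := inl w)
          (w := inr (⟨s(a,b), hf⟩ : G.edgeSet))
        rw [dist_inl_inl x w] at htri
        omega
      rcases lt_or_gt_of_ne hparity with hlt | hlt
      · exact hmain a (Sym2.mem_mk_left a b) (by omega)
      · exact hmain b (Sym2.mem_mk_right a b) (by omega)
  -- upper bound for all pairs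
  have hub : ∀ u v : V ⊕ G.edgeSet, G.subdivision.dist u v ≤ 2 * G.diam := by
    rintro (x | e) (y | f)
    · rw [dist_inl_inl]
      have : G.dist x y ≤ G.diam := G.dist_le_diam hGtop
      omega
    · have := hclaim x f; omega
    · rw [SimpleGraph.dist_comm]; have := hclaim y e; omega
    · obtain ⟨e, he⟩ := e
      induction e using Sym2.ind with
      | _ a b =>
        have h1 : G.subdivision.dist (inr (⟨s(a,b), he⟩ : G.edgeSet)) (inl a) ≤ 1 := by
          simpa using G.subdivision.dist_le ((subdivision_adj_inl_inr G
            (e := ⟨s(a,b), he⟩) (Sym2.mem_mk_left a b)).symm).toWalk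
        have htri := SConn.dist_triangle (u := inr (⟨s(a,b), he⟩ : G.edgeSet))
          (v := inl a) (w := inr f)
        have h2 := hclaim a f
        omega
  refine le_antisymm ?_ ?_
  · obtain ⟨u, v, huv⟩ := G.subdivision.exists_dist_eq_diam
    rw [← huv]
    exact hub u v
  · obtain ⟨x, y, hxy⟩ := G.exists_dist_eq_diam
    have := G.subdivision.dist_le_diam hStop (u := inl x) (v := inl y)
    rw [dist_inl_inl x y, hxy] at this
    exact this
end

section
/- For a connected graph Σ with at least one edge, the diameter of the subdivision graph S(Σ) satisfies 2·diam(Σ) ≤ diam(S(Σ)) ≤ 2·diam(Σ) + 2. -/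
open SimpleGraph Sum

variable {V : Type*}

namespace SimpleGraph

variable {G : SimpleGraph V}

lemma subdiv_adj_lr {x : V} {e : G.edgeSet} (h : x ∈ (e : Sym2 V)) :
    G.subdivision.Adj (inl x) (inr e) := h

lemma subdiv_adj_rl {x : V} {e : G.edgeSet} (h : x ∈ (e : Sym2 V)) :
    G.subdivision.Adj (inr e) (inl x) := h

/-- doubling a walk -/
lemma subdiv_double {x y : V} (p : G.Walk x y) :
    ∃ q : G.subdivision.Walk (inl x) (inl y), q.length = 2 * p.length := by
  induction p with
  | nil => exact ⟨Walk.nil, rfl⟩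
  | @cons x z y h p ih =>
    obtain ⟨q, hq⟩ := ih
    refine ⟨Walk.cons (subdiv_adj_lr (e := ⟨s(x, z), h⟩) (Sym2.mem_mk_left x z))
      (Walk.cons (subdiv_adj_rl (Sym2.mem_mk_right x z)) q), by simp [hq]; ring⟩

/-- halving a walk -/
lemma subdiv_half : ∀ n : ℕ, ∀ {x y : V} (p : G.subdivision.Walk (inl x) (inl y)),
    p.length = n → ∃ q : G.Walk x y, 2 * q.length ≤ n := by
  intro n
  induction n using Nat.strong_induction_on with
  | _ n ih =>
    intro x y p hp
    cases p with
    | nil => exact ⟨Walk.nil, by rw [← hp]; simp⟩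
    | @cons _ b _ h p' =>
      cases b with
      | inl w => exact h.elim
      | inr e =>
        cases p' with
        | @cons _ c _ h₂ p'' =>
          cases c with
          | inr f => exact h₂.elim
          | inl z =>
            simp only [Walk.length_cons] at hp
            have hn : p''.length < n := by omega
            obtain ⟨q, hq⟩ := ih p''.length hn p'' rfl
            by_cases hxz : x = z
            · subst hxz; exact ⟨q, by omega⟩
            · have he : (e : Sym2 V) = s(x, z) :=
                (Sym2.mem_and_mem_iff hxz).mp ⟨h, h₂⟩
              have hadj : G.Adj x z := by
                have := e.2
                rw [he] at this
                exact this
              exact ⟨Walk.cons hadj q, by simp; omega⟩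

lemma subdiv_connected (hconn : G.Connected) : G.subdivision.Connected := by
  have hV : Nonempty V := hconn.nonempty
  have key : ∀ a : V ⊕ G.edgeSet, ∃ x : V, ∃ w : G.subdivision.Walk a (inl x), w.length ≤ 1 := by
    rintro (x | e)
    · exact ⟨x, Walk.nil, by simp⟩
    · exact ⟨(e : Sym2 V).out.1, Walk.cons (subdiv_adj_rl (Sym2.out_fst_mem _)) Walk.nil, by simp⟩
  constructor
  · intro a b
    obtain ⟨x, w₁, -⟩ := key a
    obtain ⟨y, w₂, -⟩ := key b
    obtain ⟨q, -⟩ := subdiv_double (hconn x y).some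
    exact ⟨w₁.append (q.append w₂.reverse)⟩

end SimpleGraph

theorem subdivision_diam_bounds [Fintype V] (G : SimpleGraph V) (hconn : G.Connected)
    (hne : G.edgeSet.Nonempty) (hd : 1 ≤ G.diam) :
    2 * G.diam ≤ G.subdivision.diam ∧ G.subdivision.diam ≤ 2 * G.diam + 2 := by
  have hV : Nonempty V := hconn.nonempty
  have hS : G.subdivision.Connected := SimpleGraph.subdiv_connected hconn
  have hfin : Finite (V ⊕ G.edgeSet) := by infer_instance
  have hStop : G.subdivision.ediam ≠ ⊤ := by
    obtain ⟨u, v, huv⟩ := exists_edist_eq_ediam_of_finite (G := G.subdivision)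
    rw [← huv]
    exact edist_ne_top_iff_reachable.mpr (hS u v)
  have hGtop : G.ediam ≠ ⊤ := by
    obtain ⟨u, v, huv⟩ := exists_edist_eq_ediam_of_finite (G := G)
    rw [← huv]
    exact edist_ne_top_iff_reachable.mpr (hconn u v)
  constructor
  · obtain ⟨u, v, huv⟩ := exists_dist_eq_diam (G := G)
    calc 2 * G.diam = 2 * G.dist u v := by rw [huv]
      _ ≤ G.subdivision.dist (inl u) (inl v) := by
          obtain ⟨p, hp⟩ := (hS (inl u) (inl v)).exists_walk_length_eq_dist
          obtain ⟨q, hq⟩ := SimpleGraph.subdiv_half p.length p rfl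
          have := G.dist_le q
          omega
      _ ≤ G.subdivision.diam := dist_le_diam hStop
  · obtain ⟨a, b, hab⟩ := exists_dist_eq_diam (G := G.subdivision)
    rw [← hab]
    have key : ∀ a : V ⊕ G.edgeSet, ∃ x : V, ∃ w : G.subdivision.Walk a (inl x), w.length ≤ 1 := by
      rintro (x | e)
      · exact ⟨x, SimpleGraph.Walk.nil, by simp⟩
      · exact ⟨(e : Sym2 V).out.1,
          SimpleGraph.Walk.cons (SimpleGraph.subdiv_adj_rl (Sym2.out_fst_mem _))
            SimpleGraph.Walk.nil, by simp⟩
    obtain ⟨x, w₁, hw₁⟩ := key a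
    obtain ⟨y, w₂, hw₂⟩ := key b
    obtain ⟨p, hp⟩ := (hconn x y).exists_walk_length_eq_dist
    obtain ⟨q, hq⟩ := SimpleGraph.subdiv_double p
    have hdle : G.dist x y ≤ G.diam := dist_le_diam hGtop
    have := G.subdivision.dist_le (w₁.append (q.append w₂.reverse))
    simp [SimpleGraph.Walk.length_append] at this
    omega
end

section
/- If a connected graph Σ has diameter d and every d-arc of Σ is a d-geodesic, then the girth of Σ is at least 2d. -/
open SimpleGraph

variable {V : Type*}

/-- An `s`-arc of a graph: consecutive vertices are adjacent and there is no
immediate backtracking. -/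
def SimpleGraph.IsArc (G : SimpleGraph V) (s : ℕ) (a : ℕ → V) : Prop :=
  (∀ i < s, G.Adj (a i) (a (i + 1))) ∧ ∀ j, 0 < j → j < s → a (j - 1) ≠ a (j + 1)

lemma support_eq_map {G : SimpleGraph V} {u v : V} (w : G.Walk u v) :
    w.support = (List.range (w.length + 1)).map w.getVert := by
  induction w with
  | nil => simp [SimpleGraph.Walk.getVert]
  | cons h p ih =>
    rw [SimpleGraph.Walk.support_cons, ih]
    conv_rhs => rw [SimpleGraph.Walk.length_cons, List.range_succ_eq_map, List.map_cons,
      List.map_map]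
    congr 1

lemma dist_getVert_le {G : SimpleGraph V} (hconn : G.Connected) {u v : V} (w : G.Walk u v) :
    ∀ k, G.dist u (w.getVert k) ≤ k := by
  intro k
  induction k with
  | zero => simp [SimpleGraph.Walk.getVert_zero]
  | succ k ih =>
    by_cases hk : k < w.length
    · have hadj := w.adj_getVert_succ hk
      calc G.dist u (w.getVert (k + 1)) ≤ G.dist u (w.getVert k) + G.dist (w.getVert k) (w.getVert (k+1)) :=
            hconn.dist_triangle
        _ ≤ k + 1 := by
            have := SimpleGraph.dist_le hadj.toWalk
            simp at this
            omega
    · rw [SimpleGraph.Walk.getVert_of_length_le w (by omega)]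
      rw [SimpleGraph.Walk.getVert_of_length_le w (by omega : w.length ≤ k)] at ih
      omega

theorem girth_ge_of_arcs_are_geodesics [Fintype V] (G : SimpleGraph V) (hconn : G.Connected)
    (d : ℕ) (hd : 1 ≤ d) (hdiam : G.diam = d) (hcyc : ¬ G.IsAcyclic)
    (harc : ∀ a : ℕ → V, G.IsArc d a → G.dist (a 0) (a d) = d) :
    2 * d ≤ G.girth := by
  by_contra hlt
  push_neg at hlt
  obtain ⟨u, w, hw, hg⟩ := SimpleGraph.exists_girth_eq_length.mpr hcyc
  set g := w.length with hglen
  have hg3 : 3 ≤ g := hw.three_le_length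
  have hgd : g < 2 * d := by omega
  -- getVert injectivity on indices < g
  have hinj : ∀ p q, p < g → q < g → p ≠ q → w.getVert p ≠ w.getVert q := by
    have hnodup := hw.support_nodup
    rw [support_eq_map, List.range_succ_eq_map, List.map_cons, List.tail_cons, List.map_map] at hnodup
    have hpw : (List.range g).Pairwise
        (fun a b => w.getVert (a + 1) ≠ w.getVert (b + 1)) := by
      rw [List.Nodup, List.pairwise_map] at hnodup
      simpa [Function.comp, Nat.succ_eq_add_one] using hnodup
    have hsym : Symmetric (fun a b : ℕ => w.getVert (a + 1) ≠ w.getVert (b + 1)) :=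
      fun _ _ hab heq => hab heq.symm
    have key : ∀ i j, i < g → j < g → i ≠ j → w.getVert (i + 1) ≠ w.getVert (j + 1) := by
      intro i j hi hj hij
      haveI : Std.Symm (fun a b : ℕ => w.getVert (a + 1) ≠ w.getVert (b + 1)) := ⟨fun a b h => hsym h⟩
      exact hpw.forall (List.mem_range.mpr hi) (List.mem_range.mpr hj) hij
    intro p q hp hq hpq
    have h0g : w.getVert 0 = w.getVert g := by
      rw [SimpleGraph.Walk.getVert_zero, SimpleGraph.Walk.getVert_length]
    rcases Nat.eq_zero_or_pos p with hp0 | hp0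
    · rcases Nat.eq_zero_or_pos q with hq0 | hq0
      · omega
      · subst hp0
        rw [h0g]
        have := key (g - 1) (q - 1) (by omega) (by omega) (by omega)
        have e1 : g - 1 + 1 = g := by omega
        have e2 : q - 1 + 1 = q := by omega
        rwa [e1, e2] at this
    · rcases Nat.eq_zero_or_pos q with hq0 | hq0
      · subst hq0
        rw [h0g]
        have := key (p - 1) (g - 1) (by omega) (by omega) (by omega)
        have e1 : g - 1 + 1 = g := by omega
        have e2 : p - 1 + 1 = p := by omega
        rwa [e1, e2] at this
      · have := key (p - 1) (q - 1) (by omega) (by omega) (by omega)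
        have e1 : p - 1 + 1 = p := by omega
        have e2 : q - 1 + 1 = q := by omega
        rwa [e1, e2] at this
  -- the arc winding around the cycle
  set a : ℕ → V := fun i => w.getVert (i % g) with ha
  have hgpos : 0 < g := by omega
  have hmodsucc : ∀ i : ℕ, (i + 1) % g = (i % g + 1) % g := by
    intro i
    rw [Nat.add_mod i 1 g, Nat.mod_eq_of_lt (show 1 < g by omega)]
  have harc' : G.IsArc d a := by
    constructor
    · intro i _
      show G.Adj (w.getVert (i % g)) (w.getVert ((i + 1) % g))
      rw [hmodsucc]
      have hp : i % g < g := Nat.mod_lt _ hgpos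
      have h0 : w.getVert g = w.getVert 0 := by
        rw [hglen, SimpleGraph.Walk.getVert_length, SimpleGraph.Walk.getVert_zero]
      by_cases h : i % g + 1 = g
      · rw [h, Nat.mod_self, ← h0]
        have := w.adj_getVert_succ hp
        rwa [h] at this
      · rw [Nat.mod_eq_of_lt (show i % g + 1 < g by omega)]
        exact w.adj_getVert_succ hp
    · intro j hj0 _
      show w.getVert ((j - 1) % g) ≠ w.getVert ((j + 1) % g)
      apply hinj _ _ (Nat.mod_lt _ hgpos) (Nat.mod_lt _ hgpos)
      intro heq
      have h2 : (j - 1) % g = (j - 1 + 2) % g := by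
        rw [heq]
        congr 1
        omega
      have : g ∣ 2 := by
        have := (Nat.modEq_iff_dvd' (by omega : j - 1 ≤ j - 1 + 2)).mp h2
        simpa using this
      have := Nat.le_of_dvd (by omega) this
      omega
  have hdist := harc a harc'
  have ha0 : a 0 = w.getVert 0 := by simp [ha]
  have had : a d = w.getVert (d % g) := rfl
  have hau : a 0 = u := by rw [ha0, SimpleGraph.Walk.getVert_zero]
  set r := d % g with hr
  have hrg : r < g := Nat.mod_lt _ hgpos
  -- dist u (getVert r) ≤ r and ≤ g - r
  have hle1 : G.dist u (w.getVert r) ≤ r := dist_getVert_le hconn w r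
  have hle2 : G.dist u (w.getVert r) ≤ g - r := by
    have hrev : w.reverse.getVert (g - r) = w.getVert r := by
      rw [SimpleGraph.Walk.getVert_reverse]
      congr 1
      omega
    have := dist_getVert_le hconn w.reverse (g - r)
    rw [hrev] at this
    exact this
  have hsmall : r < d ∨ g - r < d := by
    by_cases hgle : g ≤ d
    · left; omega
    · right
      have : r = d := Nat.mod_eq_of_lt (by omega)
      omega
  rw [hau, had] at hdist
  rcases hsmall with h | h
  · omega
  · omega
end

section
/- Let Σ be a connected graph of diameter d whose girth is 2d+1, let e = {x,y} be an edge, and let u be a vertex with d(u,x) = d(u,y) = d. Then u lies on exactly two edges {u,w} with min(d(w,x),d(w,y)) = d−1. -/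
open SimpleGraph

private lemma girth_le_two_paths {V : Type*} {G : SimpleGraph V} {a b : V}
    {p q : G.Walk a b} (hp : p.IsPath) (hq : q.IsPath) (hne : p ≠ q) :
    G.girth ≤ p.length + q.length := by
  classical
  set s : Set (Sym2 V) := {e | e ∈ p.edges ∨ e ∈ q.edges} with hs
  set H : SimpleGraph V := SimpleGraph.fromEdgeSet s with hH
  have hHG : H ≤ G := by
    intro v w hvw
    rw [hH, fromEdgeSet_adj] at hvw
    rcases hvw.1 with h | h
    · exact G.mem_edgeSet.mp (p.edges_subset_edgeSet h)
    · exact G.mem_edgeSet.mp (q.edges_subset_edgeSet h)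
  have hpe : ∀ e ∈ p.edges, e ∈ H.edgeSet := by
    intro e he
    rw [hH, edgeSet_fromEdgeSet]
    exact ⟨Or.inl he, G.not_isDiag_of_mem_edgeSet (p.edges_subset_edgeSet he)⟩
  have hqe : ∀ e ∈ q.edges, e ∈ H.edgeSet := by
    intro e he
    rw [hH, edgeSet_fromEdgeSet]
    exact ⟨Or.inr he, G.not_isDiag_of_mem_edgeSet (q.edges_subset_edgeSet he)⟩
  have hnA : ¬ H.IsAcyclic := by
    intro hA
    have huniq := isAcyclic_iff_path_unique.mp hA
      (⟨p.transfer H hpe, hp.transfer hpe⟩ : H.Path a b)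
      ⟨q.transfer H hqe, hq.transfer hqe⟩
    have h2 : p.transfer H hpe = q.transfer H hqe := congrArg Subtype.val huniq
    have h3 := congrArg
      (fun r : H.Walk a b => r.transfer G
        (fun e he => (SimpleGraph.edgeSet_mono hHG) (r.edges_subset_edgeSet he))) h2
    simp only [Walk.transfer_transfer, Walk.transfer_self] at h3
    exact hne h3
  obtain ⟨v, c, hc, hlen⟩ := exists_girth_eq_length.mpr hnA
  have hsub : c.edges ⊆ p.edges ++ q.edges := by
    intro e he
    have h1 := c.edges_subset_edgeSet he
    rw [hH, edgeSet_fromEdgeSet] at h1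
    rcases h1.1 with h | h <;> simp [h]
  have hnd : c.edges.Nodup := hc.edges_nodup
  have hle := (List.subperm_of_subset hnd hsub).length_le
  rw [List.length_append, Walk.length_edges, Walk.length_edges, Walk.length_edges] at hle
  calc G.girth ≤ H.girth := girth_anti hHG hnA
    _ = c.length := hlen
    _ ≤ _ := hle

theorem two_edges_to_previous_sphere {V : Type*} [Fintype V] (G : SimpleGraph V)
    (hconn : G.Connected) (d : ℕ) (hd : 2 ≤ d) (hdiam : G.diam = d)
    (hgirth : G.girth = 2 * d + 1) {x y : V} (hxy : G.Adj x y) (u : V)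
    (hux : G.dist u x = d) (huy : G.dist u y = d) :
    {w : V | G.Adj u w ∧ min (G.dist w x) (G.dist w y) = d - 1}.ncard = 2 := by
  classical
  have hpre := hconn.preconnected
  -- existence of a closer neighbour towards a vertex at distance d
  have step : ∀ z : V, G.dist u z = d → ∃ w, G.Adj u w ∧ G.dist w z = d - 1 := by
    intro z hz
    obtain ⟨p, hp, hpl⟩ := (hpre u z).exists_path_of_dist
    rw [hz] at hpl
    cases p with
    | nil => simp at hpl; omega
    | @cons _ w _ h p' =>
      refine ⟨w, h, ?_⟩
      rw [Walk.length_cons] at hpl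
      have h1 : G.dist w z ≤ p'.length := SimpleGraph.dist_le p'
      have h2 : d ≤ 1 + G.dist w z := by
        obtain ⟨q, hq, hql⟩ := (hpre w z).exists_path_of_dist
        have h3 := SimpleGraph.dist_le (Walk.cons h q)
        rw [Walk.length_cons, hql, hz] at h3
        omega
      omega
  -- uniqueness of the closer neighbour
  have uniq : ∀ z : V, G.dist u z = d → ∀ w w', G.Adj u w → G.Adj u w' →
      G.dist w z = d - 1 → G.dist w' z = d - 1 → w = w' := by
    intro z hz w w' haw haw' hw hw'
    by_contra hne
    obtain ⟨p, hp, hpl⟩ := (hpre w z).exists_path_of_dist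
    obtain ⟨q, hq, hql⟩ := (hpre w' z).exists_path_of_dist
    have hup : u ∉ p.support := by
      intro hmem
      have h1 := SimpleGraph.dist_le (p.dropUntil u hmem)
      have h2 : (p.takeUntil u hmem).length + (p.dropUntil u hmem).length = p.length := by
        rw [← Walk.length_append, Walk.take_spec]
      rw [hz] at h1
      omega
    have huq : u ∉ q.support := by
      intro hmem
      have h1 := SimpleGraph.dist_le (q.dropUntil u hmem)
      have h2 : (q.takeUntil u hmem).length + (q.dropUntil u hmem).length = q.length := by
        rw [← Walk.length_append, Walk.take_spec]
      rw [hz] at h1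
      omega
    have hP : (Walk.cons haw p).IsPath := hp.cons hup
    have hQ : (Walk.cons haw' q).IsPath := hq.cons huq
    have hPQ : Walk.cons haw p ≠ Walk.cons haw' q := by
      intro hEq
      have := congrArg (fun r : G.Walk u z => r.getVert 1) hEq
      simp only [Walk.getVert_cons_succ, Walk.getVert_zero] at this
      exact hne this
    have hg := girth_le_two_paths hP hQ hPQ
    rw [hgirth, Walk.length_cons, Walk.length_cons] at hg
    omega
  -- no vertex is at distance d-1 from both x and y
  have notboth : ∀ w : V, G.dist w x = d - 1 → G.dist w y = d - 1 → False := by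
    intro w hwx hwy
    obtain ⟨p, hp, hpl⟩ := (hpre w x).exists_path_of_dist
    obtain ⟨q, hq, hql⟩ := (hpre w y).exists_path_of_dist
    have hxq : x ∉ q.support := by
      intro hmem
      have h1 := SimpleGraph.dist_le (q.takeUntil x hmem)
      have h2 : (q.takeUntil x hmem).length + (q.dropUntil x hmem).length = q.length := by
        rw [← Walk.length_append, Walk.take_spec]
      have h3 : (q.dropUntil x hmem).length ≠ 0 := fun h0 =>
        hxy.ne (Walk.eq_of_length_eq_zero h0)
      rw [hwx] at h1
      omega
    have hQ : (q.concat hxy.symm).IsPath := by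
      rw [← Walk.isPath_reverse_iff, Walk.reverse_concat]
      exact (hq.reverse).cons (by simpa [Walk.support_reverse] using hxq)
    have hne : p ≠ q.concat hxy.symm := by
      intro hEq
      have := congrArg Walk.length hEq
      rw [Walk.length_concat] at this
      omega
    have hg := girth_le_two_paths hp hQ hne
    rw [hgirth, Walk.length_concat] at hg
    omega
  obtain ⟨w1, haw1, hw1x⟩ := step x hux
  obtain ⟨w2, haw2, hw2y⟩ := step y huy
  have hdge : ∀ w : V, G.Adj u w → d - 1 ≤ G.dist w x ∧ d - 1 ≤ G.dist w y := by
    intro w haw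
    constructor
    · obtain ⟨q, hq, hql⟩ := (hpre w x).exists_path_of_dist
      have h3 := SimpleGraph.dist_le (Walk.cons haw q)
      rw [Walk.length_cons, hql, hux] at h3
      omega
    · obtain ⟨q, hq, hql⟩ := (hpre w y).exists_path_of_dist
      have h3 := SimpleGraph.dist_le (Walk.cons haw q)
      rw [Walk.length_cons, hql, huy] at h3
      omega
  have hw1w2 : w1 ≠ w2 := by
    intro h
    exact notboth w1 hw1x (h ▸ hw2y)
  have hset : {w : V | G.Adj u w ∧ min (G.dist w x) (G.dist w y) = d - 1} = {w1, w2} := by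
    ext w
    simp only [Set.mem_setOf_eq, Set.mem_insert_iff, Set.mem_singleton_iff]
    constructor
    · rintro ⟨haw, hmin⟩
      rcases min_cases (G.dist w x) (G.dist w y) with ⟨h1, h2⟩ | ⟨h1, h2⟩
      · rw [h1] at hmin
        exact Or.inl (uniq x hux w w1 haw haw1 hmin hw1x)
      · rw [h1] at hmin
        exact Or.inr (uniq y huy w w2 haw haw2 hmin hw2y)
    · rintro (h | h) <;> rw [h]
      · exact ⟨haw1, by rw [hw1x]; exact min_eq_left ((hdge w1 haw1).2)⟩
      · exact ⟨haw2, by rw [hw2y]; exact min_eq_right ((hdge w2 haw2).1)⟩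
  rw [hset]
  exact Set.ncard_pair hw1w2
end
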